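/- Let r ≥ 2 and let y₁, …, y_r and z₁, …, z_r be real numbers in [0,1] with y_i ≤ z_i for each i. Then ∑_{π ∈ Sym(r)} y_{π(1)}·(1 − ∏_{i=2}^{r} (1 − z_{π(i)})) ≤ ∑_{π ∈ Sym(r)} z_{π(1)}·(1 − ∏_{i=2}^{r} (1 − y_{π(i)})), where both sums range over all permutations π of {1, …, r}. -/

import Mathlib

open Finset

/-- Union bound: the probability that exactly one event occurs is at most the
probability that at least one occurs. -/
lemma lemA {ι : Type*} [DecidableEq ι] (s : Finset ι) (y : ι → ℝ)
    (h0 : ∀ i, 0 ≤ y i) (h1 : ∀ i, y i ≤ 1) :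
    ∑ a ∈ s, y a * ∏ b ∈ s.erase a, (1 - y b) ≤ 1 - ∏ b ∈ s, (1 - y b) := by
  induction s using Finset.induction_on with
  | empty => simp
  | @insert a s ha ih =>
    have hP0 : (0:ℝ) ≤ ∏ b ∈ s, (1 - y b) :=
      Finset.prod_nonneg fun i _ => by linarith [h1 i]
    have hP1 : ∏ b ∈ s, (1 - y b) ≤ 1 :=
      Finset.prod_le_one (fun i _ => by linarith [h1 i]) (fun i _ => by linarith [h0 i])
    rw [Finset.sum_insert ha, Finset.prod_insert ha, Finset.erase_insert ha]
    have hrw : ∑ b ∈ s, y b * ∏ c ∈ (insert a s).erase b, (1 - y c)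
        = (1 - y a) * ∑ b ∈ s, y b * ∏ c ∈ s.erase b, (1 - y c) := by
      rw [Finset.mul_sum]
      refine Finset.sum_congr rfl fun b hb => ?_
      have hba : b ≠ a := fun h => ha (h ▸ hb)
      rw [Finset.erase_insert_of_ne hba.symm,
        Finset.prod_insert (fun h => ha (Finset.mem_of_mem_erase h))]
      ring
    rw [hrw]
    have hya := h0 a
    have hya1 := h1 a
    nlinarith [ih, Finset.sum_nonneg (fun b (_ : b ∈ s) =>
      mul_nonneg (h0 b) (Finset.prod_nonneg fun c (_ : c ∈ s.erase b) => by linarith [h1 c]))]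

/-- Telescoping bound on a difference of products. -/
lemma lemB {ι : Type*} [DecidableEq ι] (s : Finset ι) (u v : ι → ℝ)
    (hv0 : ∀ i, 0 ≤ v i) (hvu : ∀ i, v i ≤ u i) (hu1 : ∀ i, u i ≤ 1) :
    ∏ b ∈ s, u b - ∏ b ∈ s, v b ≤ ∑ c ∈ s, (u c - v c) * ∏ b ∈ s.erase c, u b := by
  induction s using Finset.induction_on with
  | empty => simp
  | @insert a s ha ih =>
    have hU0 : (0:ℝ) ≤ ∏ b ∈ s, u b :=
      Finset.prod_nonneg fun i _ => le_trans (hv0 i) (hvu i)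
    have hV0 : (0:ℝ) ≤ ∏ b ∈ s, v b := Finset.prod_nonneg fun i _ => hv0 i
    have hVU : ∏ b ∈ s, v b ≤ ∏ b ∈ s, u b :=
      Finset.prod_le_prod (fun i _ => hv0 i) (fun i _ => hvu i)
    rw [Finset.sum_insert ha, Finset.prod_insert ha, Finset.prod_insert ha,
      Finset.erase_insert ha]
    have hrw : ∑ c ∈ s, (u c - v c) * ∏ b ∈ (insert a s).erase c, u b
        = u a * ∑ c ∈ s, (u c - v c) * ∏ b ∈ s.erase c, u b := by
      rw [Finset.mul_sum]
      refine Finset.sum_congr rfl fun c hc => ?_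
      have hca : c ≠ a := fun h => ha (h ▸ hc)
      rw [Finset.erase_insert_of_ne hca.symm,
        Finset.prod_insert (fun h => ha (Finset.mem_of_mem_erase h))]
      ring
    rw [hrw]
    have h1 := hvu a
    have h2 := hv0 a
    have h3 := hu1 a
    have h4 : (0:ℝ) ≤ u a := le_trans h2 h1
    nlinarith [ih]

/-- The key symmetric-sum inequality over a finset. -/
lemma lemC {ι : Type*} [DecidableEq ι] (s : Finset ι) (y z : ι → ℝ)
    (hy0 : ∀ i, 0 ≤ y i) (hyz : ∀ i, y i ≤ z i) (hz1 : ∀ i, z i ≤ 1) :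
    ∑ a ∈ s, y a * (1 - ∏ b ∈ s.erase a, (1 - z b)) ≤
      ∑ a ∈ s, z a * (1 - ∏ b ∈ s.erase a, (1 - y b)) := by
  have hy1 : ∀ i, y i ≤ 1 := fun i => le_trans (hyz i) (hz1 i)
  -- key: ∑_a y_a (Qy a - Qz a) ≤ ∑_c (z c - y c)(1 - Qy c)
  have key : ∑ a ∈ s, y a * ((∏ b ∈ s.erase a, (1 - y b)) - ∏ b ∈ s.erase a, (1 - z b))
      ≤ ∑ c ∈ s, (z c - y c) * (1 - ∏ b ∈ s.erase c, (1 - y b)) := by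
    have step1 : ∀ a ∈ s, y a * ((∏ b ∈ s.erase a, (1 - y b)) - ∏ b ∈ s.erase a, (1 - z b)) ≤
        ∑ c ∈ s.erase a, y a * ((z c - y c) * ∏ b ∈ (s.erase a).erase c, (1 - y b)) := by
      intro a _
      rw [← Finset.mul_sum]
      refine mul_le_mul_of_nonneg_left ?_ (hy0 a)
      have := lemB (s.erase a) (fun b => 1 - y b) (fun b => 1 - z b)
        (fun i => show (0:ℝ) ≤ 1 - z i by linarith [hz1 i])
        (fun i => show (1:ℝ) - z i ≤ 1 - y i by linarith [hyz i])
        (fun i => show (1:ℝ) - y i ≤ 1 by linarith [hy0 i])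
      convert this using 2; rfl; simp [sub_sub_cancel]
    calc ∑ a ∈ s, y a * ((∏ b ∈ s.erase a, (1 - y b)) - ∏ b ∈ s.erase a, (1 - z b))
        ≤ ∑ a ∈ s, ∑ c ∈ s.erase a, y a * ((z c - y c) * ∏ b ∈ (s.erase a).erase c, (1 - y b)) :=
          Finset.sum_le_sum step1
      _ = ∑ a ∈ s, ∑ c ∈ s.erase a,
            (z c - y c) * (y a * ∏ b ∈ (s.erase c).erase a, (1 - y b)) := by
          refine Finset.sum_congr rfl fun a _ => Finset.sum_congr rfl fun c _ => ?_
          rw [Finset.erase_right_comm]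
          ring
      _ = ∑ c ∈ s, ∑ a ∈ s.erase c,
            (z c - y c) * (y a * ∏ b ∈ (s.erase c).erase a, (1 - y b)) := by
          refine Finset.sum_comm' fun a c => ?_
          simp only [Finset.mem_erase]
          constructor
          · rintro ⟨h1, h2, h3⟩; exact ⟨⟨Ne.symm h2, h1⟩, h3⟩
          · rintro ⟨⟨h1, h2⟩, h3⟩; exact ⟨h2, Ne.symm h1, h3⟩
      _ ≤ ∑ c ∈ s, (z c - y c) * (1 - ∏ b ∈ s.erase c, (1 - y b)) := by
          refine Finset.sum_le_sum fun c _ => ?_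
          rw [← Finset.mul_sum]
          refine mul_le_mul_of_nonneg_left ?_ (by linarith [hyz c])
          exact lemA (s.erase c) y hy0 hy1
  rw [← sub_nonneg]
  calc (0:ℝ)
      ≤ (∑ c ∈ s, (z c - y c) * (1 - ∏ b ∈ s.erase c, (1 - y b)))
          - ∑ a ∈ s, y a * ((∏ b ∈ s.erase a, (1 - y b)) - ∏ b ∈ s.erase a, (1 - z b)) :=
        sub_nonneg.2 key
    _ = (∑ a ∈ s, z a * (1 - ∏ b ∈ s.erase a, (1 - y b)))
          - ∑ a ∈ s, y a * (1 - ∏ b ∈ s.erase a, (1 - z b)) := by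
        rw [← Finset.sum_sub_distrib, ← Finset.sum_sub_distrib]
        exact Finset.sum_congr rfl fun a _ => by ring

theorem stmt4 (r : ℕ) (hr : 2 ≤ r) (y z : Fin r → ℝ)
    (hy0 : ∀ i, 0 ≤ y i) (hyz : ∀ i, y i ≤ z i) (hz1 : ∀ i, z i ≤ 1) :
    ∑ π : Equiv.Perm (Fin r),
        y (π ⟨0, by omega⟩) *
          (1 - ∏ i ∈ Finset.univ.erase (⟨0, by omega⟩ : Fin r), (1 - z (π i))) ≤
      ∑ π : Equiv.Perm (Fin r),
        z (π ⟨0, by omega⟩) *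
          (1 - ∏ i ∈ Finset.univ.erase (⟨0, by omega⟩ : Fin r), (1 - y (π i))) := by
  set i0 : Fin r := ⟨0, by omega⟩ with hi0
  -- Step 1: the product over erase i0 composed with π equals product over erase (π i0)
  have hprod : ∀ (w : Fin r → ℝ) (π : Equiv.Perm (Fin r)),
      ∏ i ∈ Finset.univ.erase i0, (1 - w (π i))
        = ∏ j ∈ Finset.univ.erase (π i0), (1 - w j) := by
    intro w π
    refine Finset.prod_nbij' π π.symm ?_ ?_ ?_ ?_ ?_
    · intro i hi
      simp only [Finset.mem_erase, Finset.mem_univ, and_true] at hi ⊢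
      exact fun h => hi (π.injective h)
    · intro j hj
      simp only [Finset.mem_erase, Finset.mem_univ, and_true] at hj ⊢
      intro h
      exact hj (by rw [← h]; simp)
    · intro i _; simp
    · intro j _; simp
    · intro i _; rfl
  -- rewrite both sides as ∑ over π of a function of π i0
  have hL : ∀ (u w : Fin r → ℝ),
      ∑ π : Equiv.Perm (Fin r), u (π i0) * (1 - ∏ i ∈ Finset.univ.erase i0, (1 - w (π i)))
        = ∑ a : Fin r, ((Finset.univ.filter fun π : Equiv.Perm (Fin r) => π i0 = a).card : ℝ) *
            (u a * (1 - ∏ j ∈ Finset.univ.erase a, (1 - w j))) := by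
    intro u w
    have h1 : ∀ π : Equiv.Perm (Fin r),
        u (π i0) * (1 - ∏ i ∈ Finset.univ.erase i0, (1 - w (π i)))
        = u (π i0) * (1 - ∏ j ∈ Finset.univ.erase (π i0), (1 - w j)) := by
      intro π; rw [hprod]
    rw [Finset.sum_congr rfl fun π _ => h1 π]
    rw [← Finset.sum_fiberwise' Finset.univ (fun π : Equiv.Perm (Fin r) => π i0)
      (fun a => u a * (1 - ∏ j ∈ Finset.univ.erase a, (1 - w j)))]
    refine Finset.sum_congr rfl fun a _ => ?_
    rw [Finset.sum_const, nsmul_eq_mul]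
  rw [hL y z, hL z y]
  -- Step 2: the fiber cardinality is constant
  have hcard : ∀ a : Fin r,
      (Finset.univ.filter fun π : Equiv.Perm (Fin r) => π i0 = a).card
        = (Finset.univ.filter fun π : Equiv.Perm (Fin r) => π i0 = i0).card := by
    intro a
    refine Finset.card_bij' (fun π _ => (Equiv.swap a i0) * π) (fun π _ => (Equiv.swap a i0) * π)
      ?_ ?_ ?_ ?_
    · intro π hπ
      simp only [Finset.mem_filter, Finset.mem_univ, true_and] at hπ ⊢
      simp [Equiv.Perm.mul_apply, hπ, Equiv.swap_apply_left]
    · intro π hπ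
      simp only [Finset.mem_filter, Finset.mem_univ, true_and] at hπ ⊢
      simp [Equiv.Perm.mul_apply, hπ, Equiv.swap_apply_right]
    · intro π _
      ext x
      simp [Equiv.Perm.mul_apply]
    · intro π _
      ext x
      simp [Equiv.Perm.mul_apply]
  simp only [fun a => hcard a]
  rw [← Finset.mul_sum, ← Finset.mul_sum]
  refine mul_le_mul_of_nonneg_left ?_ (Nat.cast_nonneg _)
  exact lemC Finset.univ y z hy0 hyz hz1
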